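/- Define I₁(z) := Σ_{n=0}^∞ (1/(n!·(n+1)!)) · (z/2)^{2n+1} (the modified Bessel function of the first kind of order one). Then for every real x ≥ 0 and every s > 0, e^{x²/s} = 1 + ∫_0^∞ (x/(2√t)) · e^{t} · I₁(x·√t) · e^{−(1+s/4)·t} dt. -/

import Mathlib

open MeasureTheory

lemma aux_integrable (b : ℝ) (hb : 0 < b) (n : ℕ) :
    IntegrableOn (fun t : ℝ => t ^ n * Real.exp (-b * t)) (Set.Ioi 0) := by
  have h := integrableOn_rpow_mul_exp_neg_mul_rpow (s := (n : ℝ)) (p := 1) (b := b)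
    (neg_one_lt_zero.trans_le (Nat.cast_nonneg n)) zero_lt_one hb
  refine h.congr_fun (fun t ht => ?_) measurableSet_Ioi
  beta_reduce
  rw [Real.rpow_one, Real.rpow_natCast]

lemma aux_integral (b : ℝ) (hb : 0 < b) (n : ℕ) :
    ∫ t in Set.Ioi (0 : ℝ), t ^ n * Real.exp (-b * t)
      = (1 / b) ^ (n + 1) * n.factorial := by
  have h := Real.integral_rpow_mul_exp_neg_mul_Ioi (a := (n : ℝ) + 1) (r := b)
    (by positivity) hb
  rw [Real.Gamma_nat_eq_factorial] at h
  rw [show ((1 : ℝ) / b) ^ (n + 1) * (n.factorial : ℝ)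
      = (1 / b) ^ ((n : ℝ) + 1) * n.factorial by
    rw [← Real.rpow_natCast (1 / b) (n + 1)]; push_cast; ring_nf]
  rw [← h]
  refine setIntegral_congr_fun measurableSet_Ioi (fun t ht => ?_)
  rw [show ((n : ℝ) + 1) - 1 = ((n : ℕ) : ℝ) by ring, Real.rpow_natCast, neg_mul]

/-- Bessel identity from Section 2.5: with `I₁` the modified Bessel
function of the first kind of order one,
`e^{x²/s} = 1 + ∫_0^∞ (x/(2√t)) e^t I₁(x√t) e^{−(1+s/4)t} dt` for `x ≥ 0`, `s > 0`. -/
theorem statement13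
    (I₁ : ℝ → ℝ)
    (hI₁ : ∀ z : ℝ, I₁ z = ∑' n : ℕ,
      (1 / ((n.factorial : ℝ) * (n + 1).factorial)) * (z / 2) ^ (2 * n + 1))
    (x s : ℝ) (hx : 0 ≤ x) (hs : 0 < s) :
    Real.exp (x ^ 2 / s)
      = 1 + ∫ t in Set.Ioi (0 : ℝ),
          (x / (2 * Real.sqrt t)) * Real.exp t * I₁ (x * Real.sqrt t)
            * Real.exp (-(1 + s / 4) * t) := by
  set b : ℝ := s / 4 with hbdef
  have hb : 0 < b := by positivity
  set c : ℕ → ℝ := fun n => x ^ (2 * n + 2) / (4 ^ (n + 1) * n.factorial * (n + 1).factorial)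
    with hc
  set g : ℕ → ℝ → ℝ := fun n t => c n * (t ^ n * Real.exp (-b * t)) with hg
  set y : ℝ := x ^ 2 / s with hy
  have hy0 : 0 ≤ y := by positivity
  -- value of each integral
  have hval : ∀ n : ℕ, (∫ t in Set.Ioi (0 : ℝ), g n t) = y ^ (n + 1) / (n + 1).factorial := by
    intro n
    rw [hg]
    simp only
    rw [integral_const_mul, aux_integral b hb n]
    rw [hc, hy, hbdef]
    have h4 : (4 : ℝ) ^ (n + 1) ≠ 0 := by positivity
    have hs' : s ≠ 0 := hs.ne'
    have hn : (n.factorial : ℝ) ≠ 0 := by positivity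
    have hn1 : ((n + 1).factorial : ℝ) ≠ 0 := by positivity
    simp only
    rw [show x ^ (2 * n + 2) = (x ^ 2) ^ (n + 1) by rw [← pow_mul]; ring_nf, one_div]
    field_simp
    ring
  -- pointwise equality of integrand with the series
  have hpt : ∀ t ∈ Set.Ioi (0 : ℝ),
      (x / (2 * Real.sqrt t)) * Real.exp t * I₁ (x * Real.sqrt t)
        * Real.exp (-(1 + s / 4) * t) = ∑' n, g n t := by
    intro t ht
    have ht0 : (0 : ℝ) < t := ht
    have hst : 0 < Real.sqrt t := Real.sqrt_pos.mpr ht0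
    have hsq : Real.sqrt t ^ 2 = t := Real.sq_sqrt ht0.le
    rw [hI₁, ← tsum_mul_left, ← tsum_mul_right]
    refine tsum_congr fun n => ?_
    have hexp : Real.exp t * Real.exp (-(1 + s / 4) * t) = Real.exp (-b * t) := by
      rw [← Real.exp_add]; congr 1; rw [hbdef]; ring
    have hsp : Real.sqrt t ^ (2 * n + 1) = t ^ n * Real.sqrt t := by
      rw [pow_succ, pow_mul, hsq]
    have hn : (n.factorial : ℝ) ≠ 0 := by positivity
    have hn1 : ((n + 1).factorial : ℝ) ≠ 0 := by positivity
    rw [hg, hc]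
    simp only
    have key : (x * Real.sqrt t / 2) ^ (2 * n + 1)
        = x ^ (2 * n + 1) * (t ^ n * Real.sqrt t) / 2 ^ (2 * n + 1) := by
      rw [div_pow, mul_pow, hsp]
    rw [key, ← hexp,
      show (4 : ℝ) ^ (n + 1) = 2 ^ (2 * n + 2) by
        rw [show (4 : ℝ) = 2 ^ 2 by norm_num, ← pow_mul]; ring_nf,
      show 2 * n + 2 = (2 * n + 1) + 1 by ring, pow_succ, pow_succ]
    field_simp
    ring
  -- integrability
  have hint : ∀ n : ℕ, IntegrableOn (g n) (Set.Ioi 0) := fun n =>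
    (aux_integrable b hb n).const_mul _
  -- nonnegativity of g on Ioi 0
  have hgnn : ∀ n : ℕ, ∀ t ∈ Set.Ioi (0 : ℝ), 0 ≤ g n t := by
    intro n t ht
    have ht0 : (0 : ℝ) < t := ht
    have : 0 ≤ c n := by rw [hc]; positivity
    have : 0 ≤ t ^ n * Real.exp (-b * t) := by positivity
    rw [hg]; positivity
  -- summability of norms of integrals
  have hnorm : ∀ n : ℕ,
      (∫ t in Set.Ioi (0 : ℝ), ‖g n t‖) = y ^ (n + 1) / (n + 1).factorial := by
    intro n
    rw [← hval n]
    refine setIntegral_congr_fun measurableSet_Ioi (fun t ht => ?_)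
    exact Real.norm_of_nonneg (hgnn n t ht)
  have hsumy : Summable (fun n : ℕ => y ^ (n + 1) / (n + 1).factorial) :=
    (Real.summable_pow_div_factorial y).comp_injective Nat.succ_injective
  have hsum : Summable (fun n : ℕ => ∫ t in Set.Ioi (0 : ℝ), ‖g n t‖) := by
    simpa only [hnorm] using hsumy
  -- swap
  have hswap : (∑' n, ∫ t in Set.Ioi (0 : ℝ), g n t)
      = ∫ t in Set.Ioi (0 : ℝ), ∑' n, g n t :=
    integral_tsum_of_summable_integral_norm hint hsum
  have hI : (∫ t in Set.Ioi (0 : ℝ),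
        (x / (2 * Real.sqrt t)) * Real.exp t * I₁ (x * Real.sqrt t)
          * Real.exp (-(1 + s / 4) * t))
      = ∑' n, y ^ (n + 1) / (n + 1).factorial := by
    rw [setIntegral_congr_fun measurableSet_Ioi hpt, ← hswap]
    exact tsum_congr hval
  rw [hI]
  -- exp series
  have hexp : Real.exp y = ∑' n : ℕ, y ^ n / n.factorial := by
    rw [Real.exp_eq_exp_ℝ, NormedSpace.exp_eq_tsum_div]
  have hshift : (∑' n : ℕ, y ^ n / n.factorial)
      = 1 + ∑' n : ℕ, y ^ (n + 1) / (n + 1).factorial := by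
    rw [Summable.tsum_eq_zero_add (Real.summable_pow_div_factorial y)]
    simp
  rw [hy] at hexp ⊢
  rw [hexp, hshift]
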